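/- Let X₁ and X₂ be complex Banach spaces, let λ ∈ ℂ be a nonzero scalar, and let T : X₁ → X₂ and S : X₁* → X₂* be bijective linear maps (not assumed continuous) such that ⟨Tx, Sf⟩ = λ⟨x, f⟩ for all x ∈ X₁ and f ∈ X₁*. Then T is a bounded invertible operator and S = λ(T*)⁻¹, where T* : X₂* → X₁* is the adjoint of T; in particular S is also bounded. -/

import Mathlib

open Filter Topology

/-- Part of Claim 6 in the proof of Theorem 2.2: if `λ ∈ ℂ` is nonzero and
`T : X₁ → X₂`, `S : X₁* → X₂*` are (not necessarily continuous) bijective linear maps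
between complex Banach spaces and their duals with `⟨Tx, Sf⟩ = λ ⟨x, f⟩` for all `x ∈ X₁`
and `f ∈ X₁*`, then `T` is a bounded invertible operator and `S = λ (T*)⁻¹`, i.e.
`S f = λ (f ∘ T⁻¹)` for all `f`; in particular `S` is bounded. -/
theorem dual_pair_bounded {X₁ X₂ : Type*}
    [NormedAddCommGroup X₁] [NormedSpace ℂ X₁] [CompleteSpace X₁]
    [NormedAddCommGroup X₂] [NormedSpace ℂ X₂] [CompleteSpace X₂]
    (lam : ℂ) (hlam : lam ≠ 0)
    (T : X₁ →ₗ[ℂ] X₂) (hT : Function.Bijective T)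
    (S : StrongDual ℂ X₁ →ₗ[ℂ] StrongDual ℂ X₂) (hS : Function.Bijective S)
    (h : ∀ (x : X₁) (f : StrongDual ℂ X₁), (S f) (T x) = lam * f x) :
    ∃ T' : X₁ ≃L[ℂ] X₂, (∀ x : X₁, T' x = T x) ∧
      (∀ f : StrongDual ℂ X₁,
        S f = lam • ((f : X₁ →L[ℂ] ℂ).comp (T'.symm : X₂ →L[ℂ] X₁))) ∧
      Continuous S := by
  -- T is continuous by the closed graph theorem
  have hTc : Continuous T := by
    apply T.continuous_of_seq_closed_graph
    intro u x y hu hTu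
    rw [NormedSpace.eq_iff_forall_dual_eq (𝕜 := ℂ)]
    intro g
    obtain ⟨f, rfl⟩ := hS.2 g
    have h1 : Tendsto (fun n => (S f) (T (u n))) atTop (𝓝 ((S f) y)) :=
      ((S f).continuous.tendsto y).comp hTu
    have h2 : Tendsto (fun n => (S f) (T (u n))) atTop (𝓝 (lam * f x)) := by
      simp only [h]
      exact (continuous_const.mul f.continuous |>.tendsto x).comp hu
    have := tendsto_nhds_unique h1 h2
    rw [this, h]
  -- build the continuous linear equiv
  let Tc : X₁ →L[ℂ] X₂ := ⟨T, hTc⟩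
  let T' : X₁ ≃L[ℂ] X₂ := ContinuousLinearEquiv.ofBijective Tc
    (LinearMap.ker_eq_bot_of_injective hT.1)
    (LinearMap.range_eq_top.mpr hT.2)
  have hT'x : ∀ x : X₁, T' x = T x := fun x => rfl
  have hSf : ∀ f : StrongDual ℂ X₁,
      S f = lam • ((f : X₁ →L[ℂ] ℂ).comp (T'.symm : X₂ →L[ℂ] X₁)) := by
    intro f
    ext y
    obtain ⟨x, rfl⟩ := hT.2 y
    have hsymm : T'.symm (T x) = x := by
      have := T'.symm_apply_apply x
      rwa [hT'x] at this
    simp [h x f, hsymm, mul_comm]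
  have hScont : Continuous S := by
    apply AddMonoidHomClass.continuous_of_bound S (‖lam‖ * ‖(T'.symm : X₂ →L[ℂ] X₁)‖)
    intro f
    rw [hSf f, norm_smul]
    calc ‖lam‖ * ‖(f : X₁ →L[ℂ] ℂ).comp (T'.symm : X₂ →L[ℂ] X₁)‖
        ≤ ‖lam‖ * (‖f‖ * ‖(T'.symm : X₂ →L[ℂ] X₁)‖) := by
          gcongr; exact ContinuousLinearMap.opNorm_comp_le _ _
      _ = ‖lam‖ * ‖(T'.symm : X₂ →L[ℂ] X₁)‖ * ‖f‖ := by ring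
  exact ⟨T', hT'x, hSf, hScont⟩
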